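/- Let m be a natural number, let l be a positive integer, and suppose ι is a C^{m,γ}-embedding with constant C. Then the total l-fold evaluation map (ℝⁿ)^l × X → ℝ^l defined by ((x₁, …, x_l), f) ↦ (f̂(x₁), …, f̂(x_l)) is of class C^m. -/

import Mathlib

open Filter Topology

set_option maxHeartbeats 1600000

section Helpers

variable {E F : Type*} [NormedAddCommGroup E] [NormedSpace ℝ E]
  [NormedAddCommGroup F] [NormedSpace ℝ F]

lemma norm_sub_iteratedFDeriv_zero (f : E → F) (x y : E) :
    ‖iteratedFDeriv ℝ 0 f x - iteratedFDeriv ℝ 0 f y‖ = ‖f x - f y‖ := by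
  rw [iteratedFDeriv_zero_eq_comp]
  simp only [Function.comp_apply]
  rw [← LinearIsometryEquiv.map_sub, LinearIsometryEquiv.norm_map]

lemma norm_sub_iteratedFDeriv_fderiv (f : E → F) (i : ℕ) (x y : E) :
    ‖iteratedFDeriv ℝ i (fderiv ℝ f) x - iteratedFDeriv ℝ i (fderiv ℝ f) y‖ =
      ‖iteratedFDeriv ℝ (i + 1) f x - iteratedFDeriv ℝ (i + 1) f y‖ := by
  conv_rhs => rw [iteratedFDeriv_succ_eq_comp_right, iteratedFDeriv_succ_eq_comp_right]
  simp only [Function.comp_apply]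
  rw [← LinearIsometryEquiv.map_sub, LinearIsometryEquiv.norm_map]

omit [NormedSpace ℝ E] in
lemma tendsto_const_mul_norm_rpow {γ : ℝ} (hγ : 0 < γ) (C : ℝ) (x₀ : E) :
    Tendsto (fun x : E => C * ‖x - x₀‖ ^ γ) (𝓝 x₀) (𝓝 0) := by
  have h1 : Tendsto (fun x : E => ‖x - x₀‖) (𝓝 x₀) (𝓝 0) := tendsto_norm_sub_self x₀
  have h2 := (Real.continuousAt_rpow_const 0 γ (Or.inr hγ.le)).tendsto.comp h1
  rw [Real.zero_rpow hγ.ne'] at h2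
  simpa using h2.const_mul C

end Helpers

section Good

variable {X : Type*} [NormedAddCommGroup X] [NormedSpace ℝ X] {n : ℕ}

/-- A family of `C^m` functions with derivatives up to order `m` bounded by `C‖g‖`
and Hölder continuous (exponent `γ`) at every order `≤ m`, with constant `C‖g‖`. -/
def GoodFam {Y : Type*} [NormedAddCommGroup Y] [NormedSpace ℝ Y]
    (n : ℕ) (ι : X →ₗ[ℝ] ((Fin n → ℝ) → Y)) (m : ℕ) (γ C : ℝ) : Prop :=
  ∀ g : X,
    ContDiff ℝ m (ι g) ∧
    (∀ i : ℕ, i ≤ m → ∀ x, ‖iteratedFDeriv ℝ i (ι g) x‖ ≤ C * ‖g‖) ∧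
    (∀ i : ℕ, i ≤ m → ∀ x y,
      ‖iteratedFDeriv ℝ i (ι g) x - iteratedFDeriv ℝ i (ι g) y‖ ≤ C * ‖g‖ * ‖x - y‖ ^ γ)

lemma GoodFam.holder0 {Y : Type*} [NormedAddCommGroup Y] [NormedSpace ℝ Y]
    {ι : X →ₗ[ℝ] ((Fin n → ℝ) → Y)} {m : ℕ} {γ C : ℝ}
    (h : GoodFam n ι m γ C) (g : X) (x y : Fin n → ℝ) :
    ‖ι g x - ι g y‖ ≤ C * ‖g‖ * ‖x - y‖ ^ γ := by
  have := (h g).2.2 0 (Nat.zero_le _) x y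
  rwa [norm_sub_iteratedFDeriv_zero] at this

lemma GoodFam.bound0 {Y : Type*} [NormedAddCommGroup Y] [NormedSpace ℝ Y]
    {ι : X →ₗ[ℝ] ((Fin n → ℝ) → Y)} {m : ℕ} {γ C : ℝ}
    (h : GoodFam n ι m γ C) (g : X) (x : Fin n → ℝ) :
    ‖ι g x‖ ≤ C * ‖g‖ := by
  have := (h g).2.1 0 (Nat.zero_le _) x
  rwa [norm_iteratedFDeriv_zero] at this

variable {Y : Type*} [NormedAddCommGroup Y] [NormedSpace ℝ Y]

/-- The evaluation family, bundled as continuous linear maps. -/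
noncomputable def evalFam (ι : X →ₗ[ℝ] ((Fin n → ℝ) → Y)) {C : ℝ}
    (hb : ∀ g x, ‖ι g x‖ ≤ C * ‖g‖) (x : Fin n → ℝ) : X →L[ℝ] Y :=
  LinearMap.mkContinuous ((LinearMap.proj x).comp ι) C fun g => hb g x

@[simp] lemma evalFam_apply (ι : X →ₗ[ℝ] ((Fin n → ℝ) → Y)) {C : ℝ}
    (hb : ∀ g x, ‖ι g x‖ ≤ C * ‖g‖) (x : Fin n → ℝ) (g : X) :
    evalFam ι hb x g = ι g x := rfl

/-- The family of derivatives. -/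
noncomputable def derivFam (ι : X →ₗ[ℝ] ((Fin n → ℝ) → Y)) (hdiff : ∀ g, Differentiable ℝ (ι g)) :
    X →ₗ[ℝ] ((Fin n → ℝ) → ((Fin n → ℝ) →L[ℝ] Y)) where
  toFun g := fderiv ℝ (ι g)
  map_add' a b := by
    funext x
    show fderiv ℝ (ι (a + b)) x = fderiv ℝ (ι a) x + fderiv ℝ (ι b) x
    have h : ι (a + b) = fun y => ι a y + ι b y := by rw [map_add]; rfl
    rw [h]
    exact fderiv_add ((hdiff a) x) ((hdiff b) x)
  map_smul' c a := by
    funext x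
    show fderiv ℝ (ι (c • a)) x = c • fderiv ℝ (ι a) x
    have h : ι (c • a) = fun y => c • ι a y := by rw [map_smul]; rfl
    rw [h]
    exact fderiv_const_smul ((hdiff a) x) c

@[simp] lemma derivFam_apply (ι : X →ₗ[ℝ] ((Fin n → ℝ) → Y))
    (hdiff : ∀ g, Differentiable ℝ (ι g)) (g : X) :
    derivFam ι hdiff g = fderiv ℝ (ι g) := rfl

/-- The key lemma: a good family can be reorganized into a `C^m` map into the space of
continuous linear maps `X →L[ℝ] Y`. -/
lemma goodFam_exists_clm {γ : ℝ} (hγ : 0 < γ) :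
    ∀ (m : ℕ) (Y : Type) (_ : NormedAddCommGroup Y) (_ : NormedSpace ℝ Y)
      (C : ℝ), 0 ≤ C → ∀ (ι : X →ₗ[ℝ] ((Fin n → ℝ) → Y)), GoodFam n ι m γ C →
      ∃ Φ : (Fin n → ℝ) → (X →L[ℝ] Y),
        (∀ x g, Φ x g = ι g x) ∧ ContDiff ℝ (m : WithTop ℕ∞) Φ := by
  intro m
  induction m with
  | zero =>
    intro Y _ _ C hC ι hQ
    refine ⟨evalFam ι (fun g x => hQ.bound0 g x), fun _ _ => rfl, ?_⟩
    rw [show ((0 : ℕ) : WithTop ℕ∞) = 0 by norm_cast, contDiff_zero]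
    rw [continuous_iff_continuousAt]
    intro x₀
    rw [ContinuousAt, tendsto_iff_norm_sub_tendsto_zero]
    refine squeeze_zero (fun x => norm_nonneg _) (fun x => ?_)
      (tendsto_const_mul_norm_rpow hγ C x₀)
    refine ContinuousLinearMap.opNorm_le_bound _ (by positivity) (fun g => ?_)
    have := hQ.holder0 g x x₀
    simp only [ContinuousLinearMap.sub_apply, LinearMap.mkContinuous_apply,
      LinearMap.coe_comp, Function.comp_apply, LinearMap.proj_apply]
    calc ‖ι g x - ι g x₀‖ ≤ C * ‖g‖ * ‖x - x₀‖ ^ γ := this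
      _ = C * ‖x - x₀‖ ^ γ * ‖g‖ := by ring
  | succ m ih =>
    intro Y _ _ C hC ι hQ
    have hone : (1 : WithTop ℕ∞) ≤ ((m + 1 : ℕ) : WithTop ℕ∞) := by
      exact_mod_cast Nat.one_le_iff_ne_zero.2 (Nat.succ_ne_zero m)
    have hdiff : ∀ g : X, Differentiable ℝ (ι g) := fun g =>
      (hQ g).1.differentiable (by exact_mod_cast Nat.succ_ne_zero m)
    -- the family of derivatives
    have hι' : ∀ g, derivFam ι hdiff g = fderiv ℝ (ι g) := fun g => rfl
    have hcast : ((m + 1 : ℕ) : WithTop ℕ∞) = (m : WithTop ℕ∞) + 1 := by push_cast; ring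
    have hQ' : GoodFam n (derivFam ι hdiff) m γ C := by
      intro g
      have h1 : ContDiff ℝ ((m : WithTop ℕ∞) + 1) (ι g) := by
        rw [← hcast]; exact (hQ g).1
      refine ⟨?_, ?_, ?_⟩
      · rw [hι']
        exact (contDiff_succ_iff_fderiv.1 h1).2.2
      · intro i hi x
        rw [hι', norm_iteratedFDeriv_fderiv]
        exact (hQ g).2.1 (i + 1) (Nat.succ_le_succ hi) x
      · intro i hi x y
        rw [hι', norm_sub_iteratedFDeriv_fderiv]
        exact (hQ g).2.2 (i + 1) (Nat.succ_le_succ hi) x y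
    obtain ⟨Φ', hΦ'eq, hΦ'cd⟩ := ih ((Fin n → ℝ) →L[ℝ] Y) _ _ C hC (derivFam ι hdiff) hQ'
    -- the evaluation map itself
    have hb0 : ∀ (g : X) (x : Fin n → ℝ), ‖ι g x‖ ≤ C * ‖g‖ := fun g x => hQ.bound0 g x
    -- the Hölder estimate for the derivative family
    have hholder : ∀ (g : X) (z w : Fin n → ℝ),
        ‖fderiv ℝ (ι g) z - fderiv ℝ (ι g) w‖ ≤ C * ‖g‖ * ‖z - w‖ ^ γ := by
      intro g z w
      have := hQ'.holder0 g z w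
      rwa [hι'] at this
    -- the main estimate
    have hmain : ∀ x₀ x : Fin n → ℝ,
        ‖evalFam ι hb0 x - evalFam ι hb0 x₀ - (Φ' x₀).flip (x - x₀)‖
          ≤ C * ‖x - x₀‖ ^ γ * ‖x - x₀‖ := by
      intro x₀ x
      refine ContinuousLinearMap.opNorm_le_bound _ (by positivity) (fun g => ?_)
      have happly : (evalFam ι hb0 x - evalFam ι hb0 x₀ - (Φ' x₀).flip (x - x₀)) g
          = ι g x - ι g x₀ - fderiv ℝ (ι g) x₀ (x - x₀) := by
        simp only [ContinuousLinearMap.sub_apply, ContinuousLinearMap.flip_apply,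
          evalFam_apply]
        rw [hΦ'eq, hι']
      rw [happly]
      -- mean value estimate on the closed ball
      have hball : ∀ z ∈ Metric.closedBall x₀ ‖x - x₀‖,
          ‖fderiv ℝ (ι g) z - fderiv ℝ (ι g) x₀‖ ≤ C * ‖g‖ * ‖x - x₀‖ ^ γ := by
        intro z hz
        refine (hholder g z x₀).trans ?_
        have h2 : ‖z - x₀‖ ^ γ ≤ ‖x - x₀‖ ^ γ :=
          Real.rpow_le_rpow (norm_nonneg _) (by rw [← dist_eq_norm]; exact hz) hγ.le
        have h3 : (0:ℝ) ≤ C * ‖g‖ := by positivity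
        nlinarith
      have hf' : ∀ z ∈ Metric.closedBall x₀ ‖x - x₀‖,
          HasFDerivWithinAt (fun w => ι g w - fderiv ℝ (ι g) x₀ w)
            (fderiv ℝ (ι g) z - fderiv ℝ (ι g) x₀) (Metric.closedBall x₀ ‖x - x₀‖) z :=
        fun z _ => (((hdiff g) z).hasFDerivAt.sub
          ((fderiv ℝ (ι g) x₀).hasFDerivAt)).hasFDerivWithinAt
      have hx : x ∈ Metric.closedBall x₀ ‖x - x₀‖ := by
        simp [Metric.mem_closedBall, dist_eq_norm]
      have hx₀ : x₀ ∈ Metric.closedBall x₀ ‖x - x₀‖ := Metric.mem_closedBall_self (norm_nonneg _)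
      have hmv := (convex_closedBall x₀ ‖x - x₀‖).norm_image_sub_le_of_norm_hasFDerivWithin_le
        hf' hball hx₀ hx
      have heq : (ι g x - fderiv ℝ (ι g) x₀ x) - (ι g x₀ - fderiv ℝ (ι g) x₀ x₀)
          = ι g x - ι g x₀ - fderiv ℝ (ι g) x₀ (x - x₀) := by
        rw [map_sub]; abel
      rw [heq] at hmv
      calc ‖ι g x - ι g x₀ - fderiv ℝ (ι g) x₀ (x - x₀)‖
          ≤ C * ‖g‖ * ‖x - x₀‖ ^ γ * ‖x - x₀‖ := hmv
        _ = C * ‖x - x₀‖ ^ γ * ‖x - x₀‖ * ‖g‖ := by ring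
    -- differentiability
    have hHas : ∀ x₀, HasFDerivAt (evalFam ι hb0) ((Φ' x₀).flip) x₀ := by
      intro x₀
      rw [hasFDerivAt_iff_tendsto]
      refine squeeze_zero (fun x => by positivity) (fun x => ?_)
        (tendsto_const_mul_norm_rpow hγ C x₀)
      rcases eq_or_ne x x₀ with rfl | hne
      · simp
        positivity
      · have hpos : (0:ℝ) < ‖x - x₀‖ := by rwa [norm_pos_iff, sub_ne_zero]
        calc ‖x - x₀‖⁻¹ * ‖evalFam ι hb0 x - evalFam ι hb0 x₀ - (Φ' x₀).flip (x - x₀)‖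
            ≤ ‖x - x₀‖⁻¹ * (C * ‖x - x₀‖ ^ γ * ‖x - x₀‖) := by
              have h5 := hmain x₀ x
              have h0 : (0:ℝ) ≤ ‖x - x₀‖⁻¹ := by positivity
              nlinarith
          _ = C * ‖x - x₀‖ ^ γ := by field_simp
    have hfd : fderiv ℝ (evalFam ι hb0) = fun x => (Φ' x).flip :=
      funext fun x => (hHas x).fderiv
    have hDcd : ContDiff ℝ (m : WithTop ℕ∞) (fun x => (Φ' x).flip) := by
      have hflip : ContDiff ℝ (m : WithTop ℕ∞)
          (fun A : X →L[ℝ] ((Fin n → ℝ) →L[ℝ] Y) => A.flip) :=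
        LinearIsometryEquiv.contDiff (𝕜 := ℝ) (E := X →L[ℝ] ((Fin n → ℝ) →L[ℝ] Y))
          (F := (Fin n → ℝ) →L[ℝ] (X →L[ℝ] Y)) (ContinuousLinearMap.flipₗᵢ ℝ X (Fin n → ℝ) Y)
      exact hflip.comp hΦ'cd
    refine ⟨evalFam ι hb0, fun _ _ => rfl, ?_⟩
    rw [hcast, contDiff_succ_iff_fderiv]
    refine ⟨fun x => (hHas x).differentiableAt, ?_, ?_⟩
    · intro h
      exact absurd h (by simp)
    · rw [hfd]
      exact hDcd

end Good


/-- `ι : X →ₗ[ℝ] ((Fin n → ℝ) → ℝ)` is a `C^{m,γ}`-embedding with constant `C`: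
for every `f : X` the function `f̂ = ι f` is `m`-times continuously differentiable,
all iterated derivatives up to order `m` are bounded by `C‖f‖`, and the `m`-th
iterated derivative is `γ`-Hölder with constant `C‖f‖`. -/
def IsCmGammaEmbedding {X : Type*} [NormedAddCommGroup X] [NormedSpace ℝ X]
    (n : ℕ) (ι : X →ₗ[ℝ] ((Fin n → ℝ) → ℝ)) (m : ℕ) (γ C : ℝ) : Prop :=
  ∀ f : X,
    ContDiff ℝ m (ι f) ∧
    (∀ i : ℕ, i ≤ m → ∀ x : Fin n → ℝ, ‖iteratedFDeriv ℝ i (ι f) x‖ ≤ C * ‖f‖) ∧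
    ∀ x y : Fin n → ℝ,
      ‖iteratedFDeriv ℝ m (ι f) x - iteratedFDeriv ℝ m (ι f) y‖ ≤ C * ‖f‖ * ‖x - y‖ ^ γ

section ToGood

variable {X : Type*} [NormedAddCommGroup X] [NormedSpace ℝ X] {n : ℕ}

lemma IsCmGammaEmbedding.goodFam {γ C : ℝ} (hγ : 0 < γ) (hγ1 : γ < 1) (hC : 0 ≤ C)
    {m : ℕ} {ι : X →ₗ[ℝ] ((Fin n → ℝ) → ℝ)}
    (hemb : IsCmGammaEmbedding n ι m γ C) :
    GoodFam n ι m γ (2 * C) := by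
  intro g
  obtain ⟨h1, h2, h3⟩ := hemb g
  have hg : (0:ℝ) ≤ ‖g‖ := norm_nonneg g
  refine ⟨h1, fun i hi x => le_trans (h2 i hi x) (by nlinarith), ?_⟩
  intro i hi x y
  have hrp : (0:ℝ) ≤ ‖x - y‖ ^ γ := Real.rpow_nonneg (norm_nonneg _) γ
  rcases eq_or_lt_of_le hi with rfl | hlt
  · exact le_trans (h3 x y) (by nlinarith [mul_nonneg (mul_nonneg hC hg) hrp])
  · by_cases hxy : x = y
    · subst hxy; simp; positivity
    have hpos : (0:ℝ) < ‖x - y‖ := by rwa [norm_pos_iff, sub_ne_zero]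
    have hlip : ‖iteratedFDeriv ℝ i (ι g) x - iteratedFDeriv ℝ i (ι g) y‖
        ≤ C * ‖g‖ * ‖x - y‖ := by
      have hdiff : ∀ z ∈ (Set.univ : Set (Fin n → ℝ)),
          DifferentiableAt ℝ (iteratedFDeriv ℝ i (ι g)) z := fun z _ =>
        (h1.differentiable_iteratedFDeriv (by exact_mod_cast hlt)) z
      have hbd : ∀ z ∈ (Set.univ : Set (Fin n → ℝ)),
          ‖fderiv ℝ (iteratedFDeriv ℝ i (ι g)) z‖ ≤ C * ‖g‖ := by
        intro z _
        rw [norm_fderiv_iteratedFDeriv]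
        exact h2 (i+1) hlt z
      simpa using convex_univ.norm_image_sub_le_of_norm_fderiv_le hdiff hbd
        (Set.mem_univ y) (Set.mem_univ x)
    have hb2 : ‖iteratedFDeriv ℝ i (ι g) x - iteratedFDeriv ℝ i (ι g) y‖
        ≤ 2 * (C * ‖g‖) := by
      refine (norm_sub_le _ _).trans ?_
      have hx := h2 i hi x
      have hy := h2 i hi y
      linarith
    rcases le_or_gt ‖x - y‖ 1 with hle | hgt
    · have h4 : ‖x - y‖ ≤ ‖x - y‖ ^ γ := by
        calc ‖x - y‖ = ‖x - y‖ ^ (1:ℝ) := (Real.rpow_one _).symm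
          _ ≤ ‖x - y‖ ^ γ := Real.rpow_le_rpow_of_exponent_ge hpos hle hγ1.le
      calc ‖iteratedFDeriv ℝ i (ι g) x - iteratedFDeriv ℝ i (ι g) y‖
          ≤ C * ‖g‖ * ‖x - y‖ := hlip
        _ ≤ C * ‖g‖ * ‖x - y‖ ^ γ := by nlinarith [mul_nonneg hC hg]
        _ ≤ 2 * C * ‖g‖ * ‖x - y‖ ^ γ := by nlinarith [mul_nonneg (mul_nonneg hC hg) hrp]
    · have h4 : (1:ℝ) ≤ ‖x - y‖ ^ γ := by
        calc (1:ℝ) = 1 ^ γ := (Real.one_rpow γ).symm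
          _ ≤ ‖x - y‖ ^ γ := Real.rpow_le_rpow zero_le_one hgt.le hγ.le
      calc ‖iteratedFDeriv ℝ i (ι g) x - iteratedFDeriv ℝ i (ι g) y‖
          ≤ 2 * (C * ‖g‖) := hb2
        _ ≤ 2 * C * ‖g‖ * ‖x - y‖ ^ γ := by nlinarith [mul_nonneg hC hg]

end ToGood

/-- If `ι` is a `C^{m,γ}`-embedding with constant `C` and `l` is a positive integer,
then the total `l`-fold evaluation map `(ℝⁿ)ˡ × X → ℝˡ`,
`((x₁, …, x_l), f) ↦ (f̂(x₁), …, f̂(x_l))`, is of class `C^m`. -/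
theorem total_eval_contDiff {X : Type*} [NormedAddCommGroup X] [NormedSpace ℝ X]
    [CompleteSpace X]
    {n : ℕ} (hn : 0 < n) {γ C : ℝ} (hγ : 0 < γ) (hγ1 : γ < 1) (hC : 0 ≤ C)
    (ι : X →ₗ[ℝ] ((Fin n → ℝ) → ℝ)) (m l : ℕ) (hl : 0 < l)
    (hemb : IsCmGammaEmbedding n ι m γ C) :
    ContDiff ℝ m
      (fun p : (Fin l → Fin n → ℝ) × X => fun i : Fin l => ι p.2 (p.1 i)) := by
  obtain ⟨Φ, hΦeq, hΦcd⟩ := goodFam_exists_clm hγ m ℝ _ _ (2 * C) (by linarith) ι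
    (hemb.goodFam hγ hγ1 hC)
  have h1 : ContDiff ℝ (m : WithTop ℕ∞) (fun q : (Fin n → ℝ) × X => Φ q.1 q.2) :=
    (isBoundedBilinearMap_apply (𝕜 := ℝ) (E := X) (F := ℝ)).contDiff.comp
      ((hΦcd.comp contDiff_fst).prodMk contDiff_snd)
  rw [contDiff_pi]
  intro i
  have h2 : ContDiff ℝ (m : WithTop ℕ∞)
      (fun p : (Fin l → Fin n → ℝ) × X => Φ (p.1 i) p.2) :=
    h1.comp (((ContinuousLinearMap.proj (R := ℝ) (φ := fun _ : Fin l => Fin n → ℝ) i).contDiff.comp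
      contDiff_fst).prodMk contDiff_snd)
  simpa only [hΦeq] using h2
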